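/- An affine permutation w^{-1} lies in the Sommers region S_m^n if and only if w(i) − w(j) ≠ m for all integers i < j. -/

import Mathlib

/-- An affine permutation in `S̃_n`: a bijection `w : ℤ → ℤ` with
`w(i+n) = w(i) + n` and `w(1) + ⋯ + w(n) = n(n+1)/2`. -/
structure AffinePerm (n : ℕ) where
  toEquiv : ℤ ≃ ℤ
  shift : ∀ i : ℤ, toEquiv (i + (n : ℤ)) = toEquiv i + (n : ℤ)
  sum_one_line : (∑ i ∈ Finset.Icc (1 : ℤ) (n : ℤ), toEquiv i) = ((n : ℤ) * (n + 1)) / 2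

/-- The (open) Sommers region `S_m^n ⊆ ℝ^n`: the region containing the
fundamental alcove bounded by the `n` affine hyperplanes
`x_i - x_j = n·k` of height `(j - i) + n·k = m` of the type `Ã_{n-1}` arrangement. -/
def SommersRegion (m n : ℕ) : Set (Fin n → ℝ) :=
  {x | ∀ i j : Fin n, i ≠ j → ∀ k : ℤ,
    (((j : ℕ) : ℤ) - ((i : ℕ) : ℤ) + (n : ℤ) * k = (m : ℤ)) →
      x i - x j < (n : ℝ) * (k : ℝ)}

private lemma AffinePerm.shift_mul {n : ℕ} (w : AffinePerm n) (t i : ℤ) :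
    w.toEquiv (i + (n : ℤ) * t) = w.toEquiv i + (n : ℤ) * t := by
  induction t using Int.induction_on with
  | zero => simp
  | succ k ih =>
      have h1 : i + (n : ℤ) * ((k : ℤ) + 1) = (i + (n : ℤ) * k) + n := by ring
      rw [h1, w.shift, ih]; ring
  | pred k ih =>
      have h1 : i + (n : ℤ) * (-(k : ℤ)) = (i + (n : ℤ) * (-(k : ℤ) - 1)) + n := by ring
      rw [h1, w.shift] at ih
      have h2 : (n : ℤ) * (-(k : ℤ) - 1) = (n : ℤ) * (-(k : ℤ)) - n := by ring
      linarith

private lemma AffinePerm.symm_shift_mul {n : ℕ} (w : AffinePerm n) (t i : ℤ) :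
    w.toEquiv.symm (i + (n : ℤ) * t) = w.toEquiv.symm i + (n : ℤ) * t := by
  apply w.toEquiv.injective
  rw [Equiv.apply_symm_apply, AffinePerm.shift_mul, Equiv.apply_symm_apply]

/-- The alcove of `w⁻¹` (which contains the one-line notation point
`(w⁻¹(1), ..., w⁻¹(n))`) lies in the Sommers region `S_m^n` iff
`w(i) - w(j) ≠ m` for all integers `i < j`. -/
theorem mem_sommers_iff (m n : ℕ) (hm : 0 < m) (hn : 0 < n)
    (hcop : Nat.Coprime m n) (w : AffinePerm n) :
    (fun i : Fin n => ((w.toEquiv.symm ((i : ℕ) + 1) : ℤ) : ℝ)) ∈ SommersRegion m n ↔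
    ∀ i j : ℤ, i < j → w.toEquiv i - w.toEquiv j ≠ (m : ℤ) := by
  have usm : ∀ t i : ℤ, w.toEquiv.symm (i + (n : ℤ) * t) = w.toEquiv.symm i + (n : ℤ) * t :=
    w.symm_shift_mul
  have hnz : (n : ℤ) ≠ 0 := by exact_mod_cast hn.ne'
  have hnpos : (0 : ℤ) < n := by exact_mod_cast hn
  have hmpos : (0 : ℤ) < m := by exact_mod_cast hm
  -- LHS implies the key property
  have h1 : (fun i : Fin n => ((w.toEquiv.symm ((i : ℕ) + 1) : ℤ) : ℝ)) ∈ SommersRegion m n →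
      ∀ q : ℤ, w.toEquiv.symm q < w.toEquiv.symm (q + m) := by
    intro hx q
    rcases eq_or_lt_of_le (show 1 ≤ n from hn) with hn1 | hn2
    · -- n = 1
      have hn1' : (n : ℤ) = 1 := by omega
      have h := usm (m : ℤ) q
      rw [hn1', one_mul] at h
      rw [h]
      omega
    · -- n ≥ 2
      have hndvd : ¬ ((n : ℤ) ∣ (m : ℤ)) := by
        intro hd
        have h1 : n ∣ m := by exact_mod_cast hd
        have h2 : n ∣ Nat.gcd m n := Nat.dvd_gcd h1 dvd_rfl
        rw [hcop] at h2
        have h3 := Nat.le_of_dvd one_pos h2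
        omega
      set r := (q - 1) % (n : ℤ) with hrdef
      set t := (q - 1) / (n : ℤ) with htdef
      have hr0 : 0 ≤ r := Int.emod_nonneg _ hnz
      have hrn : r < n := Int.emod_lt_of_pos _ hnpos
      have hq : q = (r + 1) + (n : ℤ) * t := by
        have h := Int.mul_ediv_add_emod (q - 1) (n : ℤ)
        rw [← htdef, ← hrdef] at h
        linarith
      set a := r + 1 with hadef
      set s := (a + m - 1) % (n : ℤ) with hsdef
      set k := (a + m - 1) / (n : ℤ) with hkdef
      have hs0 : 0 ≤ s := Int.emod_nonneg _ hnz
      have hsn : s < n := Int.emod_lt_of_pos _ hnpos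
      have hab : a + m = (s + 1) + (n : ℤ) * k := by
        have h := Int.mul_ediv_add_emod (a + m - 1) (n : ℤ)
        rw [← hkdef, ← hsdef] at h
        linarith
      have hrs : r ≠ s := by
        intro h
        exact hndvd ⟨k, by linarith⟩
      have hI : r.toNat < n := by omega
      have hJ : s.toNat < n := by omega
      have htr : ((r.toNat : ℕ) : ℤ) = r := Int.toNat_of_nonneg hr0
      have hts : ((s.toNat : ℕ) : ℤ) = s := Int.toNat_of_nonneg hs0
      have hneq : (⟨r.toNat, hI⟩ : Fin n) ≠ ⟨s.toNat, hJ⟩ := by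
        intro h
        have h2 : r.toNat = s.toNat := Fin.mk.inj_iff.mp h
        omega
      have hcond : (((((⟨s.toNat, hJ⟩ : Fin n) : ℕ)) : ℤ) - ((((⟨r.toNat, hI⟩ : Fin n) : ℕ)) : ℤ)
          + (n : ℤ) * k = (m : ℤ)) := by
        simp only [Fin.val_mk]
        rw [htr, hts]
        linarith
      have hlt := hx _ _ hneq k hcond
      simp only [Fin.val_mk] at hlt
      rw [htr, hts] at hlt
      have harg : r + 1 = a := by rw [hadef]
      rw [harg] at hlt
      have hltZ : w.toEquiv.symm a - w.toEquiv.symm (s + 1) < (n : ℤ) * k := by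
        exact_mod_cast hlt
      have hmul : (n : ℤ) * (k + t) = (n : ℤ) * k + (n : ℤ) * t := by ring
      have e1 : q + (m : ℤ) = (s + 1) + (n : ℤ) * (k + t) := by linarith
      have e2 : w.toEquiv.symm (q + m) = w.toEquiv.symm (s + 1) + (n : ℤ) * (k + t) := by
        rw [e1, usm]
      have e3 : w.toEquiv.symm q = w.toEquiv.symm a + (n : ℤ) * t := by
        rw [hq, usm]
      rw [e2, e3]
      linarith
  -- the key property implies LHS
  have h4 : (∀ q : ℤ, w.toEquiv.symm q < w.toEquiv.symm (q + m)) →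
      (fun i : Fin n => ((w.toEquiv.symm ((i : ℕ) + 1) : ℤ) : ℝ)) ∈ SommersRegion m n := by
    intro hP i j hij k hcond
    dsimp only
    set a : ℤ := ((i : ℕ) : ℤ) + 1 with hadef
    set b : ℤ := ((j : ℕ) : ℤ) + 1 with hbdef
    have hab : a + m = b + (n : ℤ) * k := by
      rw [hadef, hbdef]; linarith
    have h := hP a
    rw [hab, usm] at h
    have hZ : w.toEquiv.symm a - w.toEquiv.symm b < (n : ℤ) * k := by omega
    exact_mod_cast hZ
  constructor
  · intro hx i j hij heq
    have hP := h1 hx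
    have hwi : w.toEquiv i = w.toEquiv j + m := by omega
    have h := hP (w.toEquiv j)
    rw [← hwi] at h
    simp only [Equiv.symm_apply_apply] at h
    omega
  · intro hR
    apply h4
    intro q
    by_contra h
    push_neg at h
    have hne : w.toEquiv.symm (q + m) ≠ w.toEquiv.symm q := by
      intro he
      have h2 := w.toEquiv.symm.injective he
      omega
    have hlt : w.toEquiv.symm (q + m) < w.toEquiv.symm q := lt_of_le_of_ne h hne
    have h3 := hR _ _ hlt
    simp only [Equiv.apply_symm_apply] at h3
    omega
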